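/- Let t ≥ 3 be an integer, let g be an odd integer with g ≢ 1 (mod 2^t), let a be an odd integer, b an even integer and c an integer, and let τ be the multiplicative order of g modulo 2^t. Define u_n = a·(g^n − b)^{-1} + c in ℤ/2^tℤ for n ≥ 0. Then the sequence (u_n) is purely periodic with least period exactly τ: u_{n+τ} = u_n for all n ≥ 0, and if T ≥ 1 satisfies u_{n+T} = u_n for all n ≥ 0 then τ divides T. -/
import Mathlib

lemma odd_isUnit_zmod (t : ℕ) (x : ℤ) (hx : Odd x) : IsUnit (x : ZMod (2 ^ t)) := by
  have h2 : Prime (2 : ℤ) := Int.prime_two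
  have hnd : ¬ (2 : ℤ) ∣ x := by
    simpa [Int.two_dvd_ne_zero] using Int.odd_iff.mp hx
  have hcop : IsCoprime (x : ℤ) ((2 : ℤ) ^ t) :=
    (IsCoprime.pow_right ((h2.coprime_iff_not_dvd.mpr hnd).symm))
  have := hcop.map (Int.castRingHom (ZMod (2 ^ t)))
  simp only [map_pow, map_intCast, map_ofNat] at this
  have h0 : ((2 : ZMod (2 ^ t)) ^ t) = 0 := by
    have := ZMod.natCast_self (2 ^ t)
    push_cast at this
    exact this
  rw [h0] at this
  exact isCoprime_zero_right.mp this

lemma odd_pow_sub_even (g b : ℤ) (hg : Odd g) (hb : Even b) (n : ℕ) : Odd (g ^ n - b) :=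
  (hg.pow).sub_even hb

/-- The inversive sequence `u_n = a (g^n - b)⁻¹ + c` in `ℤ/2^tℤ` (with `a` odd, `b` even,
`g` odd, `g ≢ 1 (mod 2^t)`) is purely periodic with least period exactly `τ`, the
multiplicative order of `g` modulo `2^t`: `u_{n+τ} = u_n` for all `n`, and any period
`T ≥ 1` is a multiple of `τ`. -/
theorem inversive_generator_period (t : ℕ) (ht : 3 ≤ t) (g : ℤ) (hg : Odd g)
    (hg1 : (g : ZMod (2 ^ t)) ≠ 1) (a b c : ℤ) (ha : Odd a) (hb : Even b) :
    (∀ n : ℕ,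
        (a : ZMod (2 ^ t)) *
              ((g : ZMod (2 ^ t)) ^ (n + orderOf (g : ZMod (2 ^ t))) - (b : ZMod (2 ^ t)))⁻¹
            + (c : ZMod (2 ^ t)) =
          (a : ZMod (2 ^ t)) * ((g : ZMod (2 ^ t)) ^ n - (b : ZMod (2 ^ t)))⁻¹
            + (c : ZMod (2 ^ t))) ∧
      ∀ T : ℕ, 1 ≤ T →
        (∀ n : ℕ,
          (a : ZMod (2 ^ t)) * ((g : ZMod (2 ^ t)) ^ (n + T) - (b : ZMod (2 ^ t)))⁻¹
              + (c : ZMod (2 ^ t)) =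
            (a : ZMod (2 ^ t)) * ((g : ZMod (2 ^ t)) ^ n - (b : ZMod (2 ^ t)))⁻¹
              + (c : ZMod (2 ^ t))) →
        orderOf (g : ZMod (2 ^ t)) ∣ T := by
  constructor
  · intro n
    rw [pow_add, pow_orderOf_eq_one, mul_one]
  · intro T hT hper
    have h0 := hper 0
    simp only [zero_add, pow_zero] at h0
    have h0' : (a : ZMod (2 ^ t)) * ((g : ZMod (2 ^ t)) ^ T - (b : ZMod (2 ^ t)))⁻¹
        = (a : ZMod (2 ^ t)) * (1 - (b : ZMod (2 ^ t)))⁻¹ := by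
      have := add_right_cancel h0
      exact this
    have haU : IsUnit (a : ZMod (2 ^ t)) := odd_isUnit_zmod t a ha
    have hinv : ((g : ZMod (2 ^ t)) ^ T - (b : ZMod (2 ^ t)))⁻¹
        = (1 - (b : ZMod (2 ^ t)))⁻¹ := haU.mul_left_cancel h0'
    -- both g^T - b and 1 - b are units
    have huT : IsUnit ((g : ZMod (2 ^ t)) ^ T - (b : ZMod (2 ^ t))) := by
      have := odd_isUnit_zmod t (g ^ T - b) (odd_pow_sub_even g b hg hb T)
      push_cast at this
      exact this
    have hu1 : IsUnit ((1 : ZMod (2 ^ t)) - (b : ZMod (2 ^ t))) := by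
      have := odd_isUnit_zmod t (1 - b) (by simpa using odd_pow_sub_even g b hg hb 0)
      push_cast at this
      exact this
    have heq : (g : ZMod (2 ^ t)) ^ T - (b : ZMod (2 ^ t))
        = (1 : ZMod (2 ^ t)) - (b : ZMod (2 ^ t)) := by
      have m1 : ((g : ZMod (2 ^ t)) ^ T - (b : ZMod (2 ^ t))) *
          ((g : ZMod (2 ^ t)) ^ T - (b : ZMod (2 ^ t)))⁻¹ = 1 :=
        ZMod.mul_inv_of_unit _ huT
      have m2 : ((1 : ZMod (2 ^ t)) - (b : ZMod (2 ^ t))) *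
          ((1 : ZMod (2 ^ t)) - (b : ZMod (2 ^ t)))⁻¹ = 1 :=
        ZMod.mul_inv_of_unit _ hu1
      calc (g : ZMod (2 ^ t)) ^ T - (b : ZMod (2 ^ t))
          = ((g : ZMod (2 ^ t)) ^ T - (b : ZMod (2 ^ t))) *
            (((1 : ZMod (2 ^ t)) - (b : ZMod (2 ^ t))) *
              ((1 : ZMod (2 ^ t)) - (b : ZMod (2 ^ t)))⁻¹) := by rw [m2, mul_one]
        _ = (((g : ZMod (2 ^ t)) ^ T - (b : ZMod (2 ^ t))) *
              ((g : ZMod (2 ^ t)) ^ T - (b : ZMod (2 ^ t)))⁻¹) *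
            ((1 : ZMod (2 ^ t)) - (b : ZMod (2 ^ t))) := by rw [← hinv]; ring
        _ = (1 : ZMod (2 ^ t)) - (b : ZMod (2 ^ t)) := by rw [m1, one_mul]
    have : (g : ZMod (2 ^ t)) ^ T = 1 := by
      have := sub_left_injective heq
      simpa using this
    exact orderOf_dvd_of_pow_eq_one this
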